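/- Sharp weak-type identity: let f ≥ 0 be integrable on ℝ, and for λ > 0 set A_λ = {x : M f(x) > λ} and B_λ = {x : f(x) > λ}, where M is the uncentered Hardy–Littlewood maximal function. Then λ(|A_λ| + |B_λ|) ≤ ∫_{A_λ} f dt + ∫_{B_λ} f dt. -/

import Mathlib

open MeasureTheory Set
open scoped ENNReal

section SWTAux
open Filter
open scoped Topology

namespace SWT

/-! ### Abstract rising sun lemma machinery -/

variable {G : ℝ → ℝ}

/-- The rising-sun shadow set of a continuous function `G`. -/
def E (G : ℝ → ℝ) : Set ℝ := {x | ∃ b, x < b ∧ G x < G b}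

noncomputable def rc (G : ℝ → ℝ) (x : ℝ) : ℝ := sInf (Ici x ∩ (E G)ᶜ)
noncomputable def lc (G : ℝ → ℝ) (x : ℝ) : ℝ := sSup (Iic x ∩ (E G)ᶜ)

lemma E_open (hGc : Continuous G) : IsOpen (E G) := by
  have : E G = ⋃ b, (Iio b ∩ {x | G x < G b}) := by
    ext x; simp [E, mem_iUnion, and_comm]
  rw [this]
  exact isOpen_iUnion fun b => (isOpen_Iio.inter (isOpen_lt hGc continuous_const))

lemma exists_max (hGc : Continuous G) (htop : Tendsto G atTop atBot) (x : ℝ) :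
    ∃ m, x ≤ m ∧ ∀ y, x ≤ y → G y ≤ G m := by
  obtain ⟨N, hN⟩ := (htop.eventually (eventually_le_atBot (G x))).exists_forall_of_atTop
  obtain ⟨m, hm, hmax⟩ := isCompact_Icc.exists_isMaxOn (s := Icc x (max x N))
    (nonempty_Icc.2 (le_max_left _ _)) hGc.continuousOn
  refine ⟨m, hm.1, fun y hy => ?_⟩
  rcases le_or_gt y (max x N) with h | h
  · exact hmax ⟨hy, h⟩
  · exact le_trans (hN y ((le_max_right x N).trans h.le)) (hmax ⟨le_refl x, le_max_left _ _⟩)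

lemma exists_notE_ge (hGc : Continuous G) (htop : Tendsto G atTop atBot) (x : ℝ) :
    ∃ y, x ≤ y ∧ y ∉ E G := by
  obtain ⟨m, hxm, hm⟩ := exists_max hGc htop x
  refine ⟨m, hxm, ?_⟩
  rintro ⟨b, hmb, hb⟩
  exact absurd (hm b (hxm.trans hmb.le)) (not_le.2 hb)

lemma rc_spec (hGc : Continuous G) (htop : Tendsto G atTop atBot) (x : ℝ) :
    rc G x ∈ Ici x ∩ (E G)ᶜ := by
  have hne : (Ici x ∩ (E G)ᶜ).Nonempty := by
    obtain ⟨y, h1, h2⟩ := exists_notE_ge hGc htop x; exact ⟨y, h1, h2⟩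
  exact IsClosed.csInf_mem (isClosed_Ici.inter (E_open hGc).isClosed_compl) hne
    (bddBelow_Ici.mono inter_subset_left)

lemma lt_rc (hGc : Continuous G) (htop : Tendsto G atTop atBot) {x : ℝ} (hx : x ∈ E G) :
    x < rc G x := by
  obtain ⟨h1, h2⟩ := rc_spec hGc htop x
  exact lt_of_le_of_ne h1 (fun h => h2 (h ▸ hx))

lemma Ico_subset_E (hGc : Continuous G) (htop : Tendsto G atTop atBot) {x : ℝ} (hx : x ∈ E G) :
    Ico x (rc G x) ⊆ E G := by
  intro y ⟨h1, h2⟩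
  by_contra hy
  exact absurd (csInf_le (bddBelow_Ici.mono inter_subset_left) ⟨h1, hy⟩) (not_le.2 h2)

/-- The rising sun lemma: `G x ≤ G (rc x)`. -/
lemma risingSun (hGc : Continuous G) (htop : Tendsto G atTop atBot) {x : ℝ} (hx : x ∈ E G) :
    G x ≤ G (rc G x) := by
  set c := rc G x with hc
  have hxc : x < c := lt_rc hGc htop hx
  obtain ⟨m, hm, hmax⟩ := isCompact_Icc.exists_isMaxOn (s := Icc x c)
    (nonempty_Icc.2 hxc.le) hGc.continuousOn
  have hGm : G x ≤ G m := hmax ⟨le_refl x, hxc.le⟩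
  have hcE : c ∉ E G := (rc_spec hGc htop x).2
  rcases eq_or_lt_of_le hm.2 with rfl | hmc
  · exact hGm
  · obtain ⟨b, hmb, hGb⟩ := Ico_subset_E hGc htop hx ⟨hm.1, hmc⟩
    rcases le_or_gt b c with hbc | hcb
    · exact absurd (hmax ⟨hm.1.trans hmb.le, hbc⟩) (not_le.2 hGb)
    · exact absurd ⟨b, hcb, lt_of_le_of_lt (hmax ⟨hxc.le, le_refl c⟩) hGb⟩ hcE

lemma exists_notE_le (hGc : Continuous G) (htop : Tendsto G atTop atBot)
    (hbot : Tendsto G atBot atTop) (x : ℝ) : ∃ y, y ≤ x ∧ y ∉ E G := by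
  by_contra h
  push_neg at h
  obtain ⟨m, hxm, hm⟩ := exists_max hGc htop x
  obtain ⟨y, hy1, hy2⟩ := ((hbot.eventually_gt_atTop (G m)).and
    (eventually_le_atBot x)).exists
  have hyE : y ∈ E G := h y hy2
  have h1 : G y ≤ G (rc G y) := risingSun hGc htop hyE
  have h2 : x ≤ rc G y := by
    by_contra h3
    exact (rc_spec hGc htop y).2 (h _ (not_le.1 h3).le)
  exact absurd ((hy1.trans_le h1).trans_le (hm _ h2)) (lt_irrefl _)

lemma lc_spec (hGc : Continuous G) (htop : Tendsto G atTop atBot)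
    (hbot : Tendsto G atBot atTop) (x : ℝ) : lc G x ∈ Iic x ∩ (E G)ᶜ := by
  have hne : (Iic x ∩ (E G)ᶜ).Nonempty := by
    obtain ⟨y, h1, h2⟩ := exists_notE_le hGc htop hbot x; exact ⟨y, h1, h2⟩
  exact IsClosed.csSup_mem (isClosed_Iic.inter (E_open hGc).isClosed_compl) hne
    (bddAbove_Iic.mono inter_subset_left)

lemma lc_lt (hGc : Continuous G) (htop : Tendsto G atTop atBot)
    (hbot : Tendsto G atBot atTop) {x : ℝ} (hx : x ∈ E G) : lc G x < x := by
  obtain ⟨h1, h2⟩ := lc_spec hGc htop hbot x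
  exact lt_of_le_of_ne h1 (fun h => h2 (by rw [h]; exact hx))

lemma Ioc_subset_E (hGc : Continuous G) (htop : Tendsto G atTop atBot)
    (hbot : Tendsto G atBot atTop) {x : ℝ} (hx : x ∈ E G) : Ioc (lc G x) x ⊆ E G := by
  intro y ⟨h1, h2⟩
  by_contra hy
  exact absurd (le_csSup (bddAbove_Iic.mono inter_subset_left) ⟨h2, hy⟩) (not_le.2 h1)

lemma Ioo_subset_E (hGc : Continuous G) (htop : Tendsto G atTop atBot)
    (hbot : Tendsto G atBot atTop) {x : ℝ} (hx : x ∈ E G) :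
    Ioo (lc G x) (rc G x) ⊆ E G := by
  intro y ⟨h1, h2⟩
  rcases le_or_gt y x with h | h
  · exact Ioc_subset_E hGc htop hbot hx ⟨h1, h⟩
  · exact Ico_subset_E hGc htop hx ⟨h.le, h2⟩

lemma rc_congr (hGc : Continuous G) (htop : Tendsto G atTop atBot)
    (hbot : Tendsto G atBot atTop) {x y : ℝ} (hx : x ∈ E G)
    (hy : y ∈ Ioo (lc G x) (rc G x)) : rc G y = rc G x := by
  have hyE : y ∈ E G := Ioo_subset_E hGc htop hbot hx hy
  refine le_antisymm ?_ ?_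
  · exact csInf_le (bddBelow_Ici.mono inter_subset_left) ⟨hy.2.le, (rc_spec hGc htop x).2⟩
  · by_contra h3
    push_neg at h3
    refine (rc_spec hGc htop y).2 (Ioo_subset_E hGc htop hbot hx
      ⟨lt_of_lt_of_le (hy.1) (rc_spec hGc htop y).1, h3⟩)

lemma lc_congr (hGc : Continuous G) (htop : Tendsto G atTop atBot)
    (hbot : Tendsto G atBot atTop) {x y : ℝ} (hx : x ∈ E G)
    (hy : y ∈ Ioo (lc G x) (rc G x)) : lc G y = lc G x := by
  have hyE : y ∈ E G := Ioo_subset_E hGc htop hbot hx hy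
  refine le_antisymm ?_ ?_
  · by_contra h3
    push_neg at h3
    refine (lc_spec hGc htop hbot y).2 (Ioo_subset_E hGc htop hbot hx
      ⟨h3, lt_of_le_of_lt (lc_spec hGc htop hbot y).1 hy.2⟩)
  · exact le_csSup (bddAbove_Iic.mono inter_subset_left) ⟨hy.1.le, (lc_spec hGc htop hbot x).2⟩

/-- Rising sun across the whole component. -/
lemma risingSun_lc (hGc : Continuous G) (htop : Tendsto G atTop atBot)
    (hbot : Tendsto G atBot atTop) {x : ℝ} (hx : x ∈ E G) :
    G (lc G x) ≤ G (rc G x) := by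
  have hlx : lc G x < x := lc_lt hGc htop hbot hx
  have hxr : x < rc G x := lt_rc hGc htop hx
  have hev : ∀ᶠ y in 𝓝[>] (lc G x), G y ≤ G (rc G x) := by
    filter_upwards [Ioc_mem_nhdsGT hlx] with y hy
    have hyE : y ∈ E G := Ioc_subset_E hGc htop hbot hx hy
    have : rc G y = rc G x :=
      rc_congr hGc htop hbot hx ⟨hy.1, lt_of_le_of_lt hy.2 hxr⟩
    exact this ▸ risingSun hGc htop hyE
  exact le_of_tendsto ((hGc.tendsto _).mono_left nhdsWithin_le_nhds) hev

noncomputable def rchat (G : ℝ → ℝ) (t : ℝ) : ℝ := sInf (Ioi t ∩ (E G)ᶜ)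

lemma rchat_lc (hGc : Continuous G) (htop : Tendsto G atTop atBot)
    (hbot : Tendsto G atBot atTop) {x : ℝ} (hx : x ∈ E G) :
    rchat G (lc G x) = rc G x := by
  have hlx : lc G x < x := lc_lt hGc htop hbot hx
  have hxr : x < rc G x := lt_rc hGc htop hx
  refine le_antisymm ?_ ?_
  · exact csInf_le (bddBelow_Ioi.mono inter_subset_left)
      ⟨hlx.trans hxr, (rc_spec hGc htop x).2⟩
  · refine le_csInf ⟨rc G x, hlx.trans hxr, (rc_spec hGc htop x).2⟩ ?_
    rintro y ⟨h1, h2⟩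
    by_contra h3
    exact h2 (Ioo_subset_E hGc htop hbot hx ⟨h1, not_le.1 h3⟩)

/-- Main abstract estimate: comparison of measures on the rising-sun set. -/
lemma meas_E_le (hGc : Continuous G) (htop : Tendsto G atTop atBot)
    (hbot : Tendsto G atBot atTop) {μ ν : Measure ℝ}
    (h : ∀ a b : ℝ, a < b → G a ≤ G b → μ (Ioo a b) ≤ ν (Ioo a b)) :
    μ (E G) ≤ ν (E G) := by
  set K : Set ℝ := (fun q : ℚ => lc G ↑q) '' {q : ℚ | (q : ℝ) ∈ E G} with hK
  have hKc : K.Countable := (Set.to_countable _).image _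
  have hcover : E G = ⋃ t ∈ K, Ioo t (rchat G t) := by
    apply Subset.antisymm
    · intro x hx
      have hlx : lc G x < x := lc_lt hGc htop hbot hx
      have hxr : x < rc G x := lt_rc hGc htop hx
      obtain ⟨q, hq1, hq2⟩ := exists_rat_btwn (hlx.trans hxr)
      have hqmem : (q : ℝ) ∈ Ioo (lc G x) (rc G x) := ⟨hq1, hq2⟩
      have hqE : (q : ℝ) ∈ E G := Ioo_subset_E hGc htop hbot hx hqmem
      have h1 : lc G (q : ℝ) = lc G x := lc_congr hGc htop hbot hx hqmem
      have h2 : rc G (q : ℝ) = rc G x := rc_congr hGc htop hbot hx hqmem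
      refine mem_biUnion ⟨q, hqE, rfl⟩ ?_
      show x ∈ Ioo (lc G (q:ℝ)) (rchat G (lc G (q:ℝ)))
      rw [rchat_lc hGc htop hbot hqE, h1, h2]
      exact ⟨hlx, hxr⟩
    · refine iUnion₂_subset ?_
      rintro t ⟨q, hq, rfl⟩
      rw [rchat_lc hGc htop hbot hq]
      exact Ioo_subset_E hGc htop hbot hq
  have hdisj : K.PairwiseDisjoint (fun t => Ioo t (rchat G t)) := by
    rintro t ⟨q, hq, rfl⟩ t' ⟨q', hq', rfl⟩ hne
    rw [Function.onFun, Set.disjoint_left]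
    intro z hz hz'
    rw [rchat_lc hGc htop hbot hq] at hz
    rw [rchat_lc hGc htop hbot hq'] at hz'
    exact hne ((lc_congr hGc htop hbot hq hz).symm.trans (lc_congr hGc htop hbot hq' hz'))
  have hperI : ∀ t ∈ K, μ (Ioo t (rchat G t)) ≤ ν (Ioo t (rchat G t)) := by
    rintro t ⟨q, hq, rfl⟩
    rw [rchat_lc hGc htop hbot hq]
    exact h _ _ ((lc_lt hGc htop hbot hq).trans (lt_rc hGc htop hq))
      (risingSun_lc hGc htop hbot hq)
  calc μ (E G) = ∑' t : K, μ (Ioo t (rchat G t)) := by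
        rw [hcover]; exact measure_biUnion hKc hdisj (fun t _ => measurableSet_Ioo)
    _ ≤ ∑' t : K, ν (Ioo t (rchat G t)) :=
        ENNReal.tsum_le_tsum (fun t => hperI t t.2)
    _ = ν (E G) := by
        rw [hcover]; exact (measure_biUnion hKc hdisj (fun t _ => measurableSet_Ioo)).symm

/-! ### The one-sided maximal sets and the sunrise inequality -/

/-- right maximal set -/
def Ep (g : ℝ → ℝ) (lam : ℝ) : Set ℝ :=
  {x | ∃ b, x < b ∧ lam * (b - x) < ∫ t in x..b, g t}

/-- left maximal set -/
def Em (g : ℝ → ℝ) (lam : ℝ) : Set ℝ :=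
  {x | ∃ a, a < x ∧ lam * (x - a) < ∫ t in a..x, g t}

lemma sunrise {g : ℝ → ℝ} {lam : ℝ} (hg0 : 0 ≤ g)
    (hgi : Integrable g) (hlam : 0 < lam) :
    IsOpen (Ep g lam) ∧
    ENNReal.ofReal lam * volume (Ep g lam) ≤ ∫⁻ t in Ep g lam, ENNReal.ofReal (g t) := by
  have hii : ∀ a b : ℝ, IntervalIntegrable g volume a b := fun a b => hgi.intervalIntegrable
  set S : ℝ := ∫ t, g t with hS
  set F : ℝ → ℝ := fun x => ∫ t in (0:ℝ)..x, g t with hFdef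
  have hFgap : ∀ a b : ℝ, F b - F a = ∫ t in a..b, g t := by
    intro a b
    have := intervalIntegral.integral_add_adjacent_intervals (hii 0 a) (hii a b)
    simp only [hFdef]; linarith
  have hFc : Continuous F := intervalIntegral.continuous_primitive hii 0
  set G : ℝ → ℝ := fun x => F x - lam * x with hGdef
  have hGc : Continuous G := hFc.sub (continuous_const.mul continuous_id)
  have hEG : Ep g lam = E G := by
    ext x
    constructor
    · rintro ⟨b, hxb, h⟩
      exact ⟨b, hxb, by have := hFgap x b; simp only [hGdef]; nlinarith⟩
    · rintro ⟨b, hxb, h⟩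
      exact ⟨b, hxb, by have := hFgap x b; simp only [hGdef] at h; nlinarith⟩
  have hFb : ∀ x, |F x| ≤ S := by
    intro x
    rcases le_or_gt 0 x with h | h
    · show |∫ t in (0:ℝ)..x, g t| ≤ S
      rw [intervalIntegral.integral_of_le h, abs_of_nonneg
        (setIntegral_nonneg measurableSet_Ioc fun t _ => hg0 t)]
      exact setIntegral_le_integral hgi (ae_of_all _ hg0)
    · show |∫ t in (0:ℝ)..x, g t| ≤ S
      rw [intervalIntegral.integral_of_ge h.le, abs_neg, abs_of_nonneg
        (setIntegral_nonneg measurableSet_Ioc fun t _ => hg0 t)]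
      exact setIntegral_le_integral hgi (ae_of_all _ hg0)
  have htop : Tendsto G atTop atBot := by
    apply tendsto_atBot_mono (f := fun x => S - lam * x)
    · intro x
      have := (abs_le.1 (hFb x)).2
      simp only [hGdef]; linarith
    · apply tendsto_atBot_add_const_left
      exact tendsto_neg_atTop_atBot.comp ((tendsto_const_mul_atTop_of_pos hlam).2 tendsto_id)
  have hbot : Tendsto G atBot atTop := by
    apply tendsto_atTop_mono (g := G) (f := fun x => -S - lam * x)
    · intro x
      have := (abs_le.1 (hFb x)).1
      simp only [hGdef]; linarith
    · apply tendsto_atTop_add_const_left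
      exact tendsto_neg_atBot_atTop.comp ((tendsto_const_mul_atBot_of_pos hlam).2 tendsto_id)
  have hEo : IsOpen (Ep g lam) := hEG ▸ E_open hGc
  refine ⟨hEo, ?_⟩
  set μ : Measure ℝ := (ENNReal.ofReal lam) • volume with hμ
  set ν : Measure ℝ := volume.withDensity (fun t => ENNReal.ofReal (g t)) with hν
  have hper : ∀ a b : ℝ, a < b → G a ≤ G b → μ (Ioo a b) ≤ ν (Ioo a b) := by
    intro a b hab hG
    have h1 : μ (Ioo a b) = ENNReal.ofReal (lam * (b - a)) := by
      rw [hμ, Measure.smul_apply, smul_eq_mul, Real.volume_Ioo,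
        ENNReal.ofReal_mul hlam.le]
    have hio : IntegrableOn g (Ioo a b) volume := hgi.integrableOn
    have h2 : ν (Ioo a b) = ENNReal.ofReal (∫ t in Ioo a b, g t) := by
      rw [hν, withDensity_apply _ measurableSet_Ioo,
        ← ofReal_integral_eq_lintegral_ofReal hio (ae_of_all _ fun t => hg0 t)]
    rw [h1, h2]
    apply ENNReal.ofReal_le_ofReal
    have h3 : F b - F a = ∫ t in Ioo a b, g t := by
      rw [hFgap a b, intervalIntegral.integral_of_le hab.le, integral_Ioc_eq_integral_Ioo]
    simp only [hGdef] at hG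
    nlinarith
  have := meas_E_le hGc htop hbot hper
  rw [← hEG] at this
  calc ENNReal.ofReal lam * volume (Ep g lam) = μ (Ep g lam) := by
        rw [hμ, Measure.smul_apply, smul_eq_mul]
    _ ≤ ν (Ep g lam) := this
    _ = ∫⁻ t in Ep g lam, ENNReal.ofReal (g t) := by
        rw [hν, withDensity_apply _ hEo.measurableSet]

lemma Em_eq (g : ℝ → ℝ) (lam : ℝ) :
    Em g lam = Neg.neg ⁻¹' (Ep (fun t => g (-t)) lam) := by
  ext x
  simp only [Em, Ep, mem_setOf_eq, mem_preimage]
  constructor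
  · rintro ⟨a, hax, h⟩
    refine ⟨-a, by linarith, ?_⟩
    rw [intervalIntegral.integral_comp_neg (a := -x) (b := -a) (f := g)]
    simp only [neg_neg]
    convert h using 2 <;> ring
  · rintro ⟨b, hxb, h⟩
    refine ⟨-b, by linarith, ?_⟩
    rw [intervalIntegral.integral_comp_neg (a := -x) (b := b) (f := g)] at h
    simp only [neg_neg] at h
    convert h using 2 <;> ring

lemma sunrise_m {g : ℝ → ℝ} {lam : ℝ} (hg0 : 0 ≤ g)
    (hgi : Integrable g) (hlam : 0 < lam) :
    IsOpen (Em g lam) ∧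
    ENNReal.ofReal lam * volume (Em g lam) ≤ ∫⁻ t in Em g lam, ENNReal.ofReal (g t) := by
  set g' : ℝ → ℝ := fun t => g (-t) with hg'
  have hmp : MeasurePreserving (Neg.neg : ℝ → ℝ) volume volume :=
    Measure.measurePreserving_neg _
  have hme : MeasurableEmbedding (Neg.neg : ℝ → ℝ) :=
    (MeasurableEquiv.neg ℝ).measurableEmbedding
  have hg'i : Integrable g' := (hmp.integrable_comp_emb hme).2 hgi
  have hg'0 : 0 ≤ g' := fun t => hg0 (-t)
  obtain ⟨ho, hle⟩ := sunrise hg'0 hg'i hlam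
  have hEm := Em_eq g lam
  constructor
  · rw [hEm]; exact ho.preimage continuous_neg
  · rw [hEm, hmp.measure_preimage ho.measurableSet.nullMeasurableSet]
    have heq : ∫⁻ t in Neg.neg ⁻¹' (Ep g' lam), ENNReal.ofReal (g t)
        = ∫⁻ t in Ep g' lam, ENNReal.ofReal (g' t) := by
      have := hmp.setLIntegral_comp_preimage_emb hme
        (fun t => ENNReal.ofReal (g' t)) (Ep g' lam)
      simpa [hg', neg_neg] using this
    rw [heq]
    exact hle

end SWT
end SWTAux

/-- The uncentered Hardy-Littlewood maximal function over intervals. -/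
noncomputable def M (f : ℝ → ℝ) (x : ℝ) : ℝ≥0∞ :=
  ⨆ (a : ℝ) (b : ℝ) (_ : a ≤ x) (_ : x ≤ b) (_ : a < b),
    ENNReal.ofReal ((b - a)⁻¹ * ∫ t in a..b, f t)

section MainAux
open SWT

lemma M_gt_iff {g : ℝ → ℝ} (hgi : Integrable g) {lam : ℝ} (hlam : 0 < lam) (x : ℝ) :
    ENNReal.ofReal lam < M g x ↔ x ∈ Ep g lam ∪ Em g lam := by
  have hii : ∀ a b : ℝ, IntervalIntegrable g volume a b := fun a b => hgi.intervalIntegrable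
  constructor
  · intro h
    rw [M] at h
    simp only [lt_iSup_iff] at h
    obtain ⟨a, b, ha, hb, hab, hlt⟩ := h
    have h0 : lam < (b - a)⁻¹ * ∫ t in a..b, g t := by
      by_contra hc
      push_neg at hc
      exact lt_irrefl _ (hlt.trans_le (ENNReal.ofReal_le_ofReal hc))
    have hba : 0 < b - a := sub_pos.2 hab
    have h1 : lam * (b - a) < ∫ t in a..b, g t := by
      have := (lt_div_iff₀ hba).1 (by rw [div_eq_inv_mul]; exact h0)
      linarith
    have hsplit : (∫ t in a..x, g t) + ∫ t in x..b, g t = ∫ t in a..b, g t :=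
      intervalIntegral.integral_add_adjacent_intervals (hii a x) (hii x b)
    rcases lt_or_ge (lam * (x - a)) (∫ t in a..x, g t) with hcase | hcase
    · right
      have hax : a < x := by
        rcases lt_or_eq_of_le ha with h | h
        · exact h
        · exfalso; rw [← h] at hcase; simp at hcase
      exact ⟨a, hax, hcase⟩
    · left
      have h2 : lam * (b - x) < ∫ t in x..b, g t := by nlinarith
      have hxb : x < b := by
        rcases lt_or_eq_of_le hb with h | h
        · exact h
        · exfalso; rw [h] at h2; simp at h2
      exact ⟨b, hxb, h2⟩
  · intro h
    have key : ∀ a b : ℝ, a ≤ x → x ≤ b → a < b →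
        lam * (b - a) < (∫ t in a..b, g t) → ENNReal.ofReal lam < M g x := by
      intro a b ha hb hab hlt
      have hba : 0 < b - a := sub_pos.2 hab
      have h0 : lam < (b - a)⁻¹ * ∫ t in a..b, g t := by
        rw [inv_mul_eq_div, lt_div_iff₀ hba]; linarith
      calc ENNReal.ofReal lam < ENNReal.ofReal ((b - a)⁻¹ * ∫ t in a..b, g t) :=
            (ENNReal.ofReal_lt_ofReal_iff_of_nonneg hlam.le).2 h0
        _ ≤ M g x := by
            rw [M]
            refine le_trans ?_ (le_iSup _ a)
            refine le_trans ?_ (le_iSup _ b)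
            refine le_trans ?_ (le_iSup _ ha)
            refine le_trans ?_ (le_iSup _ hb)
            exact le_iSup (fun _ : a < b => ENNReal.ofReal ((b - a)⁻¹ * ∫ t in a..b, g t)) hab
    rcases h with ⟨b, hxb, hlt⟩ | ⟨a, hax, hlt⟩
    · exact key x b (le_refl x) hxb.le hxb hlt
    · exact key a x hax.le (le_refl x) hax hlt

end MainAux

/-- Sharp weak-type inequality:
`λ(|A_λ| + |B_λ|) ≤ ∫_{A_λ} f + ∫_{B_λ} f`. -/
theorem sharp_weak_type (f : ℝ → ℝ) (hf : 0 ≤ f) (hint : Integrable f)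
    (lam : ℝ) (hlam : 0 < lam) :
    ENNReal.ofReal lam *
        (volume {x | ENNReal.ofReal lam < M f x} + volume {x | lam < f x})
      ≤ (∫⁻ t in {x | ENNReal.ofReal lam < M f x}, ENNReal.ofReal (f t))
        + ∫⁻ t in {x | lam < f x}, ENNReal.ofReal (f t) := by
  classical
  -- replace f by a measurable representative g
  obtain ⟨g, hgm, hg0, hfg, hgi⟩ : ∃ g : ℝ → ℝ, Measurable g ∧ 0 ≤ g ∧
      f =ᵐ[volume] g ∧ Integrable g volume := by
    refine ⟨fun x => max (hint.1.mk f x) 0, (hint.1.stronglyMeasurable_mk.measurable).max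
      measurable_const, fun x => le_max_right _ _, ?_, ?_⟩
    · filter_upwards [hint.1.ae_eq_mk] with x hx
      rw [← hx]; exact (max_eq_left (hf x)).symm
    · refine hint.congr ?_
      filter_upwards [hint.1.ae_eq_mk] with x hx
      rw [← hx]; exact (max_eq_left (hf x)).symm
  have hMfg : M f = M g := by
    funext x
    rw [M, M]
    congr 1; funext a; congr 1; funext b
    congr 2
    have : (∫ t in a..b, f t) = ∫ t in a..b, g t :=
      intervalIntegral.integral_congr_ae (by filter_upwards [hfg] with t ht _ using ht)
    rw [this]
  set A : Set ℝ := {x | ENNReal.ofReal lam < M g x} with hA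
  set B : Set ℝ := {x | lam < g x} with hB
  have hBmeas : MeasurableSet B := measurableSet_lt measurable_const hgm
  -- replace all the f-objects in the goal with g-objects
  have hBae : {x | lam < f x} =ᵐ[volume] B := by
    apply Filter.eventuallyEq_set.2
    filter_upwards [hfg] with x hx
    rw [hB]; simp [hx]
  have goal_red : ENNReal.ofReal lam * (volume A + volume B)
      ≤ (∫⁻ t in A, ENNReal.ofReal (g t)) + ∫⁻ t in B, ENNReal.ofReal (g t) →
      ENNReal.ofReal lam *
        (volume {x | ENNReal.ofReal lam < M f x} + volume {x | lam < f x})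
      ≤ (∫⁻ t in {x | ENNReal.ofReal lam < M f x}, ENNReal.ofReal (f t))
        + ∫⁻ t in {x | lam < f x}, ENNReal.ofReal (f t) := by
    intro h
    have e1 : {x | ENNReal.ofReal lam < M f x} = A := by rw [hA, hMfg]
    have e2 : volume {x | lam < f x} = volume B := measure_congr hBae
    have e3 : (∫⁻ t in A, ENNReal.ofReal (f t)) = ∫⁻ t in A, ENNReal.ofReal (g t) := by
      apply lintegral_congr_ae
      filter_upwards [ae_restrict_of_ae hfg] with t ht
      rw [ht]
    have e4 : (∫⁻ t in {x | lam < f x}, ENNReal.ofReal (f t))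
        = ∫⁻ t in B, ENNReal.ofReal (g t) := by
      rw [Measure.restrict_congr_set hBae]
      apply lintegral_congr_ae
      filter_upwards [ae_restrict_of_ae hfg] with t ht
      rw [ht]
    rw [e1, e2, e3, e4]
    exact h
  apply goal_red
  -- now everything is about g
  have hAeq : A = SWT.Ep g lam ∪ SWT.Em g lam := by
    ext x; exact M_gt_iff hgi hlam x
  obtain ⟨hEpo, hEple⟩ := SWT.sunrise hg0 hgi hlam
  obtain ⟨hEmo, hEmle⟩ := SWT.sunrise_m hg0 hgi hlam
  set μ : Measure ℝ := (ENNReal.ofReal lam) • volume with hμ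
  set ν : Measure ℝ := volume.withDensity (fun t => ENNReal.ofReal (g t)) with hν
  have hμ_apply : ∀ s : Set ℝ, μ s = ENNReal.ofReal lam * volume s := by
    intro s; rw [hμ, Measure.smul_apply, smul_eq_mul]
  have hν_apply : ∀ s : Set ℝ, MeasurableSet s → ν s = ∫⁻ t in s, ENNReal.ofReal (g t) := by
    intro s hs; rw [hν, withDensity_apply _ hs]
  have hνuniv : ν univ ≠ ⊤ := by
    rw [hν_apply univ MeasurableSet.univ]
    rw [Measure.restrict_univ, ← ofReal_integral_eq_lintegral_ofReal hgi (ae_of_all _ hg0)]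
    exact ENNReal.ofReal_ne_top
  have h1 : μ (SWT.Ep g lam) ≤ ν (SWT.Ep g lam) := by
    rw [hμ_apply, hν_apply _ hEpo.measurableSet]; exact hEple
  have h2 : μ (SWT.Em g lam) ≤ ν (SWT.Em g lam) := by
    rw [hμ_apply, hν_apply _ hEmo.measurableSet]; exact hEmle
  set I : Set ℝ := SWT.Ep g lam ∩ SWT.Em g lam with hI
  have hImeas : MeasurableSet I := hEpo.measurableSet.inter hEmo.measurableSet
  have hAmeas : MeasurableSet A := by rw [hAeq]; exact (hEpo.union hEmo).measurableSet
  -- step 1 : μ A + μ I ≤ ν A + ν I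
  have step1 : μ A + μ I ≤ ν A + ν I := by
    rw [hAeq]
    calc μ (SWT.Ep g lam ∪ SWT.Em g lam) + μ (SWT.Ep g lam ∩ SWT.Em g lam)
        = μ (SWT.Ep g lam) + μ (SWT.Em g lam) := measure_union_add_inter _ hEmo.measurableSet
      _ ≤ ν (SWT.Ep g lam) + ν (SWT.Em g lam) := add_le_add h1 h2
      _ = ν (SWT.Ep g lam ∪ SWT.Em g lam) + ν (SWT.Ep g lam ∩ SWT.Em g lam) :=
          (measure_union_add_inter _ hEmo.measurableSet).symm
  -- the excess κ
  set κ : ℝ≥0∞ := ∫⁻ t in B, ENNReal.ofReal (g t - lam) with hκ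
  have hpoint : ∀ t : ℝ, ENNReal.ofReal (g t)
      ≤ ENNReal.ofReal lam + ENNReal.ofReal (g t - lam) := by
    intro t
    rcases le_total (g t) lam with h | h
    · exact le_trans (ENNReal.ofReal_le_ofReal h) le_self_add
    · rw [← ENNReal.ofReal_add hlam.le (by linarith)]
      apply ENNReal.ofReal_le_ofReal; linarith
  -- step 2 : ν I ≤ μ I + κ
  have step2 : ν I ≤ μ I + κ := by
    rw [hν_apply _ hImeas, hμ_apply]
    calc (∫⁻ t in I, ENNReal.ofReal (g t))
        ≤ ∫⁻ t in I, (ENNReal.ofReal lam + ENNReal.ofReal (g t - lam)) :=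
          lintegral_mono fun t => hpoint t
      _ = ENNReal.ofReal lam * volume I + ∫⁻ t in I, ENNReal.ofReal (g t - lam) := by
          rw [lintegral_add_left measurable_const, setLIntegral_const]
      _ ≤ ENNReal.ofReal lam * volume I + κ := by
          apply add_le_add_right
          rw [hκ, ← lintegral_indicator hImeas, ← lintegral_indicator hBmeas]
          apply lintegral_mono
          intro t
          by_cases htB : t ∈ B
          · by_cases htI : t ∈ I
            · rw [Set.indicator_of_mem htI, Set.indicator_of_mem htB]
            · rw [Set.indicator_of_notMem htI]; exact zero_le
          · have : g t - lam ≤ 0 := by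
              simp only [hB, mem_setOf_eq, not_lt] at htB
              linarith
            rw [Set.indicator_of_notMem htB]
            by_cases htI : t ∈ I
            · rw [Set.indicator_of_mem htI, ENNReal.ofReal_eq_zero.2 this]
            · rw [Set.indicator_of_notMem htI]
  -- step 3 : ν B = μ B + κ
  have step3 : ν B = μ B + κ := by
    rw [hν_apply _ hBmeas, hμ_apply, hκ]
    have : (∫⁻ t in B, ENNReal.ofReal (g t))
        = ∫⁻ t in B, (ENNReal.ofReal lam + ENNReal.ofReal (g t - lam)) := by
      apply setLIntegral_congr_fun hBmeas
      intro t ht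
      have : lam < g t := ht
      dsimp only
      rw [← ENNReal.ofReal_add hlam.le (by linarith)]
      congr 1; linarith
    rw [this, lintegral_add_left measurable_const, setLIntegral_const]
  -- finiteness
  have hμI_fin : μ I ≠ ⊤ :=
    ne_top_of_le_ne_top hνuniv ((le_trans (measure_mono inter_subset_left) h1).trans
      (measure_mono (subset_univ _)))
  -- conclude
  have main : μ A + μ B ≤ ν A + ν B := by
    have hcancel : μ A ≤ ν A + κ := by
      have h' := step1.trans (add_le_add_right step2 (ν A))
      have h'' : ν A + (μ I + κ) = ν A + κ + μ I := by ring
      rw [h''] at h'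
      exact (ENNReal.add_le_add_iff_right hμI_fin).1 h'
    calc μ A + μ B ≤ (ν A + κ) + μ B := add_le_add_left hcancel _
      _ = ν A + (μ B + κ) := by ring
      _ = ν A + ν B := by rw [← step3]
  rw [mul_add, ← hμ_apply A, ← hμ_apply B,
    ← hν_apply A hAmeas, ← hν_apply B hBmeas]
  exact main
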